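/- arXiv:2101.02838 — 6 statements merged into one kernel-verified Lean document; each statement's English description precedes it below -/
import Mathlib

section
/- For every integer k ≥ 2, a finite connected simple graph G is a (k,2)-completeness-resolvable graph if and only if G is isomorphic to a graph in B_k. -/
open SimpleGraph

/-- `w` enumerates a `(k, m)`-completeness-resolving set of `G`:
`w` is injective, its range `W` is a proper subset of the vertex set, and the map
`u ↦ (dist (w 1) u, …, dist (w k) u)` is a bijection from `V ∖ W` onto `[m]^k`. -/
def IsCRS {V : Type*} (G : SimpleGraph V) {k : ℕ} (w : Fin k → V) (m : ℕ) : Prop :=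
  Function.Injective w ∧ Set.range w ≠ Set.univ ∧
    Function.Injective
      (fun u : {u : V // u ∉ Set.range w} => fun i : Fin k => G.dist (w i) u.1) ∧
    Set.range (fun u : {u : V // u ∉ Set.range w} => fun i : Fin k => G.dist (w i) u.1) =
      {x : Fin k → ℕ | ∀ i, 1 ≤ x i ∧ x i ≤ m}

/-- `G` is a `(k, m)`-completeness-resolvable graph. -/
def IsCRG {V : Type*} (G : SimpleGraph V) (k m : ℕ) : Prop :=
  ∃ w : Fin k → V, IsCRS G w m

/-- `G` is completeness-resolvable. -/
def CompletenessResolvable {V : Type*} (G : SimpleGraph V) : Prop :=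
  ∃ (k m : ℕ) (w : Fin k → V), IsCRS G w m

/-! ### The family `B_k`.
Tuples in `[2]^k` are modelled as functions `Fin k → Fin 2`, the `Fin 2`-value `j`
corresponding to the entry `j + 1 ∈ {1, 2}`. -/

/-- The graph `H1 ∘ H2` on `[k] ⊔ [2]^k`. -/
def comp2 {k : ℕ} (H1 : SimpleGraph (Fin k)) (H2 : SimpleGraph (Fin k → Fin 2)) :
    SimpleGraph (Fin k ⊕ (Fin k → Fin 2)) where
  Adj a b :=
    match a, b with
    | Sum.inl i, Sum.inl j => H1.Adj i j
    | Sum.inr x, Sum.inr y => H2.Adj x y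
    | Sum.inl i, Sum.inr x => x i = 0
    | Sum.inr x, Sum.inl i => x i = 0
  symm := by
    constructor
    rintro (i | x) (j | y) h
    · exact H1.adj_symm h
    · exact h
    · exact h
    · exact H2.adj_symm h
  loopless := by
    constructor
    rintro (i | x) h
    · exact H1.irrefl h
    · exact H2.irrefl h

/-- The defining condition of `B_k`: for each `i`, the edges of `H2` lying in the complete
bipartite graph `B_i^k` (i.e. joining a tuple with `i`-th entry `1` to one with `i`-th entry `2`)
cover every tuple all of whose entries on the closed neighbourhood of `i` in `H1` equal `2`. -/
def BCond {k : ℕ} (H1 : SimpleGraph (Fin k)) (H2 : SimpleGraph (Fin k → Fin 2)) : Prop :=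
  ∀ (i : Fin k) (x : Fin k → Fin 2),
    (∀ j : Fin k, (j = i ∨ H1.Adj i j) → x j = 1) →
    ∃ y : Fin k → Fin 2, H2.Adj x y ∧ y i ≠ x i

/-- The family `B_k`, as a set of graphs on `[k] ⊔ [2]^k`. -/
def Bset (k : ℕ) : Set (SimpleGraph (Fin k ⊕ (Fin k → Fin 2))) :=
  {G | ∃ H1 H2, BCond H1 H2 ∧ G = comp2 H1 H2}

/-- `H2` is `H1`-minimal. -/
def H1Minimal {k : ℕ} (H1 : SimpleGraph (Fin k)) (H2 : SimpleGraph (Fin k → Fin 2)) : Prop :=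
  comp2 H1 H2 ∈ Bset k ∧
    ∀ H2' : SimpleGraph (Fin k → Fin 2), H2' < H2 → comp2 H1 H2' ∉ Bset k

/-- The graph `U_k` on `[2]^k`, with unique edge `{(1,…,1), (2,…,2)}`. -/
def Uk (k : ℕ) : SimpleGraph (Fin k → Fin 2) :=
  SimpleGraph.fromEdgeSet {s(fun _ => (0 : Fin 2), fun _ => (1 : Fin 2))}

/-- The graph `V_k` on `[2]^k`, whose edges join `(2,…,2)` to the tuples having exactly one
entry equal to `1`. -/
def Vk (k : ℕ) : SimpleGraph (Fin k → Fin 2) :=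
  SimpleGraph.fromEdgeSet
    {e | ∃ i : Fin k, e = s(Function.update (fun _ => (1 : Fin 2)) i 0, fun _ => (1 : Fin 2))}

/-- The graph `R_k` on `[2]^k`: the perfect matching pairing each tuple with its complement. -/
def Rk (k : ℕ) : SimpleGraph (Fin k → Fin 2) :=
  SimpleGraph.fromRel fun x y => ∀ i, x i ≠ y i

/-- The hypercube graph `Q_k` on `[2]^k`: tuples are adjacent when they differ in exactly one
coordinate. -/
def Qk (k : ℕ) : SimpleGraph (Fin k → Fin 2) :=
  SimpleGraph.fromRel fun x y => ∃ i, x i ≠ y i ∧ ∀ j, j ≠ i → x j = y j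

/-! ### The family `C_k`.
Tuples in `[3]^k` are modelled as functions `Fin k → Fin 3`, the `Fin 3`-value `j`
corresponding to the entry `j + 1 ∈ {1, 2, 3}`. -/

/-- Entries `a` and `b` (of `{1,2,3}`, coded in `Fin 3`) satisfy `|a - b| ≤ 1`. -/
def near3 (a b : Fin 3) : Prop := (a : ℕ) ≤ (b : ℕ) + 1 ∧ (b : ℕ) ≤ (a : ℕ) + 1

/-- `{x, y}` is an edge of the bipartite graph `C_i^k` (between `i`-th entry `1` and
`i`-th entry `2`, with all other entries differing by at most `1`). -/
def CAdj {k : ℕ} (i : Fin k) (x y : Fin k → Fin 3) : Prop :=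
  ((x i = 0 ∧ y i = 1) ∨ (x i = 1 ∧ y i = 0)) ∧ ∀ t, t ≠ i → near3 (x t) (y t)

/-- `{x, y}` is an edge of the bipartite graph `D_i^k` (between `i`-th entry `2` and
`i`-th entry `3`, with all other entries differing by at most `1`). -/
def DAdj {k : ℕ} (i : Fin k) (x y : Fin k → Fin 3) : Prop :=
  ((x i = 1 ∧ y i = 2) ∨ (x i = 2 ∧ y i = 1)) ∧ ∀ t, t ≠ i → near3 (x t) (y t)

/-- The graph `K̄_[k] ∘ H2` on `[k] ⊔ [3]^k`. -/
def comp3 {k : ℕ} (H2 : SimpleGraph (Fin k → Fin 3)) :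
    SimpleGraph (Fin k ⊕ (Fin k → Fin 3)) where
  Adj a b :=
    match a, b with
    | Sum.inl _, Sum.inl _ => False
    | Sum.inr x, Sum.inr y => H2.Adj x y
    | Sum.inl i, Sum.inr x => x i = 0
    | Sum.inr x, Sum.inl i => x i = 0
  symm := by
    constructor
    rintro (i | x) (j | y) h
    · exact h
    · exact h
    · exact h
    · exact H2.adj_symm h
  loopless := by
    constructor
    rintro (i | x) h
    · exact h
    · exact H2.irrefl h

/-- The defining condition of `C_k`: every edge of `H2` lies in some `C_i^k` or `D_i^k`;
for each `i` the edges of `H2` in `C_i^k` cover `[3]^k_i(2)`, and the edges of `H2` in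
`D_i^k` cover `S_i^k`. -/
def CCond {k : ℕ} (H2 : SimpleGraph (Fin k → Fin 3)) : Prop :=
  (∀ x y, H2.Adj x y → ∃ i, CAdj i x y ∨ DAdj i x y) ∧
  (∀ (i : Fin k) (x : Fin k → Fin 3), x i = 1 → ∃ y, H2.Adj x y ∧ CAdj i x y) ∧
  (∀ (i : Fin k) (x : Fin k → Fin 3), x i = 2 → (∀ t, x t ≠ 0) →
    ∃ y, H2.Adj x y ∧ DAdj i x y)

/-- The family `C_k`, as a set of graphs on `[k] ⊔ [3]^k`. -/
def Cset (k : ℕ) : Set (SimpleGraph (Fin k ⊕ (Fin k → Fin 3))) :=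
  {G | ∃ H2, CCond H2 ∧ G = comp3 H2}

/-- The graph `Γ_k` on `[3]^k`: distinct tuples are adjacent when all their entries differ
by at most `1`. -/
def GammaK (k : ℕ) : SimpleGraph (Fin k → Fin 3) :=
  SimpleGraph.fromRel fun x y => ∀ i, near3 (x i) (y i)

/-- `H2` is `k`-minimal. -/
def KMinimalC {k : ℕ} (H2 : SimpleGraph (Fin k → Fin 3)) : Prop :=
  comp3 H2 ∈ Cset k ∧
    ∀ H2' : SimpleGraph (Fin k → Fin 3), H2' < H2 → comp3 H2' ∉ Cset k


private lemma iso_dist_le' {V W : Type*} {G : SimpleGraph V} {H : SimpleGraph W}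
    (e : G ≃g H) (u v : V) : H.dist (e u) (e v) ≤ G.dist u v := by
  by_cases h : G.Reachable u v
  · obtain ⟨p, hp⟩ := h.exists_walk_length_eq_dist
    calc H.dist (e u) (e v) ≤ (p.map e.toHom).length := SimpleGraph.dist_le _
      _ = G.dist u v := by rw [SimpleGraph.Walk.length_map, hp]
  · rw [SimpleGraph.dist_eq_zero_of_not_reachable h]
    have : ¬ H.Reachable (e u) (e v) := by
      intro hr
      have := hr.map e.symm.toHom
      exact h (by simpa using this)
    rw [SimpleGraph.dist_eq_zero_of_not_reachable this]

private lemma iso_dist_eq' {V W : Type*} {G : SimpleGraph V} {H : SimpleGraph W}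
    (e : G ≃g H) (u v : V) : H.dist (e u) (e v) = G.dist u v := by
  refine le_antisymm (iso_dist_le' e u v) ?_
  have := iso_dist_le' e.symm (e u) (e v)
  simpa using this

private lemma dist_eq_two' {V : Type*} {G : SimpleGraph V} {u v z : V} (h1 : G.Adj u z)
    (h2 : G.Adj z v) (hne : u ≠ v) (hna : ¬ G.Adj u v) : G.dist u v = 2 := by
  have hle : G.dist u v ≤ 2 := by
    have := SimpleGraph.dist_le (SimpleGraph.Walk.cons h1 h2.toWalk)
    simpa using this
  have hr : G.Reachable u v := ⟨SimpleGraph.Walk.cons h1 h2.toWalk⟩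
  have h0 : 0 < G.dist u v := hr.pos_dist_of_ne hne
  have h1' : G.dist u v ≠ 1 := fun h => hna (SimpleGraph.dist_eq_one_iff_adj.mp h)
  omega

private lemma exists_mid' {V : Type*} {G : SimpleGraph V} {u v : V} (h : G.dist u v = 2) :
    ∃ z, G.Adj u z ∧ G.Adj z v := by
  have hr : G.Reachable u v := SimpleGraph.Reachable.of_dist_ne_zero (by omega)
  obtain ⟨p, hp⟩ := hr.exists_walk_length_eq_dist
  rw [h] at hp
  cases p with
  | nil => simp at hp
  | cons ha q =>
    cases q with
    | nil => simp at hp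
    | cons hb q2 =>
      cases q2 with
      | nil => exact ⟨_, ha, hb⟩
      | cons _ _ => simp [SimpleGraph.Walk.length_cons] at hp


private lemma fin2_cases' (a : Fin 2) : a = 0 ∨ a = 1 := by
  fin_cases a <;> simp

private lemma isCRS_map' {V W : Type*} {G : SimpleGraph V} {H : SimpleGraph W} (e : G ≃g H)
    {k : ℕ} (w : Fin k → W) (m : ℕ) (h : IsCRS H w m) :
    IsCRS G (fun i => e.symm (w i)) m := by
  obtain ⟨hinj, hne, hpinj, hprange⟩ := h
  have hmem : ∀ u : V, (u ∉ Set.range fun i => e.symm (w i)) ↔ e u ∉ Set.range w := by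
    intro u
    simp only [Set.mem_range, not_exists]
    constructor
    · intro hu i hi
      exact hu i (by rw [hi]; simp)
    · intro hu i hi
      exact hu i (by rw [← hi]; simp)
  let φ : {u : V // u ∉ Set.range fun i => e.symm (w i)} → {u : W // u ∉ Set.range w} :=
    fun u => ⟨e u.1, (hmem u.1).mp u.2⟩
  have hφbij : Function.Bijective φ := by
    constructor
    · intro a b hab
      exact Subtype.ext (e.toEquiv.injective (congrArg Subtype.val hab))
    · intro b
      refine ⟨⟨e.symm b.1, ?_⟩, ?_⟩
      · rw [hmem]; simpa using b.2
      · exact Subtype.ext (by simp [φ])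
  have hdist : ∀ (u : {u : V // u ∉ Set.range fun i => e.symm (w i)}) (i : Fin k),
      G.dist (e.symm (w i)) u.1 = H.dist (w i) (φ u).1 := by
    intro u i
    have := iso_dist_eq' e (e.symm (w i)) u.1
    simpa [φ] using this.symm
  have hcomp : (fun u : {u : V // u ∉ Set.range fun i => e.symm (w i)} =>
      fun i : Fin k => G.dist (e.symm (w i)) u.1) =
      (fun u : {u : W // u ∉ Set.range w} => fun i : Fin k => H.dist (w i) u.1) ∘ φ := by
    funext u
    exact funext fun i => hdist u i
  refine ⟨?_, ?_, ?_, ?_⟩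
  · intro a b hab
    exact hinj (e.symm.toEquiv.injective hab)
  · intro hc
    obtain ⟨y, hy⟩ := Set.ne_univ_iff_exists_notMem _ |>.mp hne
    have : e.symm y ∈ Set.range fun i => e.symm (w i) := hc ▸ Set.mem_univ _
    obtain ⟨i, hi⟩ := this
    exact hy ⟨i, e.symm.toEquiv.injective hi⟩
  · rw [hcomp]
    exact hpinj.comp hφbij.injective
  · rw [hcomp, Set.range_comp, Set.range_eq_univ.mpr hφbij.surjective,
      Set.image_univ, hprange]

private lemma comp2_dist' {k : ℕ} {H1 : SimpleGraph (Fin k)}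
    {H2 : SimpleGraph (Fin k → Fin 2)} (hB : BCond H1 H2) (i : Fin k) (x : Fin k → Fin 2) :
    (comp2 H1 H2).dist (Sum.inl i) (Sum.inr x) = (x i : ℕ) + 1 := by
  rcases fin2_cases' (x i) with hx | hx
  · rw [hx]
    exact SimpleGraph.dist_eq_one_iff_adj.mpr (show x i = 0 from hx)
  · rw [hx]
    have hna : ¬ (comp2 H1 H2).Adj (Sum.inl i) (Sum.inr x) := by
      intro h
      rw [show (comp2 H1 H2).Adj (Sum.inl i) (Sum.inr x) = (x i = 0) from rfl] at h
      rw [hx] at h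
      exact absurd h (by decide)
    by_cases hall : ∀ j : Fin k, (j = i ∨ H1.Adj i j) → x j = 1
    · obtain ⟨y, hxy, hyi⟩ := hB i x hall
      have hy0 : y i = 0 := by
        rcases fin2_cases' (y i) with h | h
        · exact h
        · exact absurd (h.trans hx.symm) hyi
      exact dist_eq_two' (show (comp2 H1 H2).Adj (Sum.inl i) (Sum.inr y) from hy0)
        (show (comp2 H1 H2).Adj (Sum.inr y) (Sum.inr x) from H2.adj_symm hxy)
        (by simp) hna
    · push_neg at hall
      obtain ⟨j, hj, hxj⟩ := hall
      have hxj0 : x j = 0 := (fin2_cases' (x j)).resolve_right hxj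
      have hji : H1.Adj i j := by
        rcases hj with rfl | hj
        · exact absurd hx hxj
        · exact hj
      exact dist_eq_two' (show (comp2 H1 H2).Adj (Sum.inl i) (Sum.inl j) from hji)
        (show (comp2 H1 H2).Adj (Sum.inl j) (Sum.inr x) from hxj0)
        (by simp) hna

private lemma isCRS_comp2' {k : ℕ} {H1 : SimpleGraph (Fin k)}
    {H2 : SimpleGraph (Fin k → Fin 2)} (hB : BCond H1 H2) :
    IsCRS (comp2 H1 H2) (fun i => (Sum.inl i : Fin k ⊕ (Fin k → Fin 2))) 2 := by
  have hnotin : ∀ x : Fin k → Fin 2,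
      (Sum.inr x : Fin k ⊕ (Fin k → Fin 2)) ∉ Set.range
        (fun i => (Sum.inl i : Fin k ⊕ (Fin k → Fin 2))) := by
    intro x ⟨i, hi⟩
    exact Sum.inl_ne_inr hi
  have hrep : ∀ u : {u : Fin k ⊕ (Fin k → Fin 2) // u ∉ Set.range
      (fun i => (Sum.inl i : Fin k ⊕ (Fin k → Fin 2)))},
      ∃ x : Fin k → Fin 2, u.1 = Sum.inr x := by
    rintro ⟨(i | x), hu⟩
    · exact absurd ⟨i, rfl⟩ hu
    · exact ⟨x, rfl⟩
  refine ⟨fun a b hab => Sum.inl_injective hab, ?_, ?_, ?_⟩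
  · intro hc
    exact hnotin (fun _ => 0) (hc ▸ Set.mem_univ _)
  · intro a b hab
    obtain ⟨x, hx⟩ := hrep a
    obtain ⟨y, hy⟩ := hrep b
    have : ∀ i, (x i : ℕ) + 1 = (y i : ℕ) + 1 := by
      intro i
      have h2 : (comp2 H1 H2).dist (Sum.inl i) a.1 = (comp2 H1 H2).dist (Sum.inl i) b.1 :=
        congrFun hab i
      rwa [hx, hy, comp2_dist' hB, comp2_dist' hB] at h2
    refine Subtype.ext (by rw [hx, hy]; exact congrArg _ (funext fun i =>
      Fin.val_injective (by have := this i; omega)))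
  · ext f
    constructor
    · rintro ⟨u, rfl⟩ i
      obtain ⟨x, hx⟩ := hrep u
      show 1 ≤ (comp2 H1 H2).dist (Sum.inl i) u.1 ∧ (comp2 H1 H2).dist (Sum.inl i) u.1 ≤ 2
      rw [hx, comp2_dist' hB]
      have := (x i).is_le
      omega
    · intro hf
      refine ⟨⟨Sum.inr (fun i => if f i = 1 then 0 else 1), hnotin _⟩, ?_⟩
      funext i
      show (comp2 H1 H2).dist (Sum.inl i) (Sum.inr fun j => if f j = 1 then 0 else 1) = f i
      rw [comp2_dist' hB]
      by_cases h : f i = 1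
      · simp [h]
      · have h2 : f i = 2 := by have := hf i; omega
        simp [h, h2]

/-- **Proposition.** For `k ≥ 2`, a finite connected simple graph `G` is a `(k,2)`-CRG iff
`G` is isomorphic to a graph in `B_k`. -/
theorem isCRG_two_iff {V : Type*} [Fintype V] (k : ℕ) (hk : 2 ≤ k) (G : SimpleGraph V)
    (hconn : G.Connected) (hcard : 2 ≤ Fintype.card V) :
    IsCRG G k 2 ↔ ∃ H ∈ Bset k, Nonempty (G ≃g H) := by
  constructor
  · rintro ⟨w, hinj, hne, hpinj, hprange⟩
    have hbd : ∀ (u : {u : V // u ∉ Set.range w}) (i : Fin k),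
        1 ≤ G.dist (w i) u.1 ∧ G.dist (w i) u.1 ≤ 2 := by
      intro u i
      have hm : (fun i => G.dist (w i) u.1) ∈ {x : Fin k → ℕ | ∀ i, 1 ≤ x i ∧ x i ≤ 2} := by
        rw [← hprange]; exact ⟨u, rfl⟩
      exact hm i
    have hex : ∀ x : Fin k → Fin 2, ∃ u : {u : V // u ∉ Set.range w},
        (fun i => G.dist (w i) u.1) = fun i => (x i : ℕ) + 1 := by
      intro x
      have hm : (fun i => ((x i : ℕ) + 1)) ∈ Set.range
          (fun u : {u : V // u ∉ Set.range w} => fun i : Fin k => G.dist (w i) u.1) := by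
        rw [hprange]
        intro i
        show 1 ≤ (x i : ℕ) + 1 ∧ (x i : ℕ) + 1 ≤ 2
        have := (x i).is_le
        omega
      exact hm
    choose t ht using hex
    have hdist : ∀ (x : Fin k → Fin 2) (i : Fin k), G.dist (w i) (t x).1 = (x i : ℕ) + 1 :=
      fun x i => congrFun (ht x) i
    have hadj : ∀ (i : Fin k) (x : Fin k → Fin 2), G.Adj (w i) (t x).1 ↔ x i = 0 := by
      intro i x
      rw [← SimpleGraph.dist_eq_one_iff_adj, hdist]
      constructor
      · intro h
        rcases fin2_cases' (x i) with h0 | h1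
        · exact h0
        · rw [h1] at h; norm_num at h
      · intro h; rw [h]; rfl
    set g : (Fin k ⊕ (Fin k → Fin 2)) → V := Sum.elim w (fun x => (t x).1) with hg
    have hginj : Function.Injective g := by
      rintro (i | x) (j | y) hab
      · exact congrArg Sum.inl (hinj hab)
      · exact absurd ⟨i, hab⟩ (t y).2
      · exact absurd ⟨j, hab.symm⟩ (t x).2
      · refine congrArg Sum.inr ?_
        have htxy : t x = t y := Subtype.ext hab
        have h1 : (fun i => ((x i : ℕ) + 1)) = fun i => ((y i : ℕ) + 1) := by
          rw [← ht x, ← ht y, htxy]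
        funext i
        have := congrFun h1 i
        rcases fin2_cases' (x i) with h0 | h0 <;> rcases fin2_cases' (y i) with h2 | h2 <;>
          rw [h0, h2] <;> rw [h0, h2] at this <;> first | rfl | norm_num at this
    have hgsur : Function.Surjective g := by
      intro v
      by_cases hv : v ∈ Set.range w
      · obtain ⟨i, hi⟩ := hv; exact ⟨Sum.inl i, hi⟩
      · refine ⟨Sum.inr (fun i => if G.dist (w i) v = 1 then 0 else 1), ?_⟩
        have heq : t (fun i => if G.dist (w i) v = 1 then 0 else 1) = ⟨v, hv⟩ := by
          apply hpinj
          funext i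
          show G.dist (w i) (t _).1 = G.dist (w i) v
          rw [hdist]
          have hb : 1 ≤ G.dist (w i) v ∧ G.dist (w i) v ≤ 2 := hbd ⟨v, hv⟩ i
          by_cases h1 : G.dist (w i) v = 1
          · simp [h1]
          · have h2 : G.dist (w i) v = 2 := by omega
            simp [h1, h2]
        exact congrArg Subtype.val heq
    let H1 : SimpleGraph (Fin k) :=
      { Adj := fun i j => G.Adj (w i) (w j)
        symm := ⟨fun a b h => G.adj_symm h⟩
        loopless := ⟨fun a h => G.irrefl h⟩ }
    let H2 : SimpleGraph (Fin k → Fin 2) :=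
      { Adj := fun x y => G.Adj (t x).1 (t y).1
        symm := ⟨fun a b h => G.adj_symm h⟩
        loopless := ⟨fun a h => G.irrefl h⟩ }
    have hiso : ∀ a b, G.Adj (g a) (g b) ↔ (comp2 H1 H2).Adj a b := by
      rintro (i | x) (j | y)
      · exact Iff.rfl
      · exact hadj i y
      · exact (G.adj_comm _ _).trans (hadj j x)
      · exact Iff.rfl
    have hB : BCond H1 H2 := by
      intro i x hx
      have hxi : x i = 1 := hx i (Or.inl rfl)
      have hd2 : G.dist (w i) (t x).1 = 2 := by rw [hdist, hxi]; rfl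
      obtain ⟨z, hz1, hz2⟩ := exists_mid' hd2
      obtain ⟨a, rfl⟩ := hgsur z
      rcases a with j | y
      · have hj : H1.Adj i j := hz1
        have h0 : x j = 0 := (hadj j x).mp hz2
        have h1 : x j = 1 := hx j (Or.inr hj)
        exact absurd (h0.symm.trans h1) (by decide)
      · refine ⟨y, ?_, ?_⟩
        · exact G.adj_symm hz2
        · have hy : y i = 0 := (hadj i y).mp hz1
          rw [hy, hxi]; decide
    exact ⟨comp2 H1 H2, ⟨H1, H2, hB, rfl⟩,
      ⟨(SimpleGraph.Iso.symm
        { toEquiv := Equiv.ofBijective g ⟨hginj, hgsur⟩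
          map_rel_iff' := @fun a b => hiso a b })⟩⟩
  · rintro ⟨H, ⟨H1, H2, hB, rfl⟩, ⟨e⟩⟩
    exact ⟨fun i => e.symm (Sum.inl i), isCRS_map' e _ 2 (isCRS_comp2' hB)⟩
end

section
/- For a positive integer k, a finite connected simple graph G is a (k,1)-completeness-resolvable graph if and only if G has exactly k+1 vertices and G has a universal vertex (a vertex adjacent to every other vertex of G). -/
open SimpleGraph

/-- **Proposition.** For a positive integer `k`, a finite connected simple graph `G` is a
`(k,1)`-CRG iff `G` has exactly `k + 1` vertices and a universal vertex. -/
theorem isCRG_m_one_iff {V : Type*} [Fintype V] (k : ℕ) (hk : 1 ≤ k) (G : SimpleGraph V)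
    (hconn : G.Connected) (hcard : 2 ≤ Fintype.card V) :
    IsCRG G k 1 ↔ Fintype.card V = k + 1 ∧ ∃ v : V, ∀ u : V, u ≠ v → G.Adj v u := by
  classical
  constructor
  · rintro ⟨w, hinj, hne, hinjPsi, hrange⟩
    have hone : (fun _ : Fin k => 1) ∈ {x : Fin k → ℕ | ∀ i, 1 ≤ x i ∧ x i ≤ 1} := by
      intro i; exact ⟨le_refl 1, le_refl 1⟩
    rw [← hrange] at hone
    obtain ⟨u0, hu0⟩ := hone
    have huniq : ∀ u : {u : V // u ∉ Set.range w}, u = u0 := by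
      intro u
      apply hinjPsi
      have hu : (fun i => G.dist (w i) u.1) ∈ Set.range
          (fun u : {u : V // u ∉ Set.range w} => fun i : Fin k => G.dist (w i) u.1) :=
        ⟨u, rfl⟩
      rw [hrange] at hu
      have hu' : ∀ i, 1 ≤ G.dist (w i) u.1 ∧ G.dist (w i) u.1 ≤ 1 := hu
      have h2 : ∀ i, G.dist (w i) u0.1 = 1 := fun i => congrFun hu0 i
      funext i
      show G.dist (w i) u.1 = G.dist (w i) u0.1
      have := hu' i
      have := h2 i
      omega
    have hin : Nat.card (Set.range w) = k := by
      rw [Nat.card_range_of_injective hinj, Nat.card_eq_fintype_card, Fintype.card_fin]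
    have hout : Nat.card {u : V // u ∉ Set.range w} = 1 :=
      Nat.card_eq_one_iff_unique.mpr ⟨⟨fun a b => (huniq a).trans (huniq b).symm⟩, ⟨u0⟩⟩
    have hsum : (Set.range w).ncard + (Set.range w)ᶜ.ncard = Nat.card V :=
      Set.ncard_add_ncard_compl _
    have hVc : Nat.card V = Fintype.card V := Nat.card_eq_fintype_card
    have h1 : (Set.range w).ncard = k := by rw [← Nat.card_coe_set_eq]; exact hin
    have h2 : ((Set.range w)ᶜ).ncard = 1 := by rw [← Nat.card_coe_set_eq]; exact hout
    refine ⟨by omega, u0.1, ?_⟩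
    intro u hu
    have hmem : u ∈ Set.range w := by
      by_contra h
      exact hu (congrArg Subtype.val (huniq ⟨u, h⟩))
    obtain ⟨i, rfl⟩ := hmem
    have hd : G.dist (w i) u0.1 = 1 := congrFun hu0 i
    exact ((SimpleGraph.dist_eq_one_iff_adj).mp hd).symm
  · rintro ⟨hcard', v, hv⟩
    have hk' : Fintype.card {u : V // u ≠ v} = k := by
      have hs : ({v} : Set V).ncard + ({v}ᶜ : Set V).ncard = Nat.card V :=
        Set.ncard_add_ncard_compl _
      have h2 : ({v}ᶜ : Set V).ncard = Fintype.card {u : V // u ≠ v} := by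
        rw [← Nat.card_coe_set_eq]
        exact (Nat.card_congr (Equiv.subtypeEquivRight (fun u => by simp))).trans
          Nat.card_eq_fintype_card
      rw [Set.ncard_singleton, h2, Nat.card_eq_fintype_card, hcard'] at hs
      omega
    let e := (Fintype.equivFinOfCardEq hk').symm
    have hmem : ∀ u : V, u ∉ Set.range (fun i => (e i).1) ↔ u = v := by
      intro u
      constructor
      · intro h
        by_contra huv
        exact h ⟨e.symm ⟨u, huv⟩, by simp⟩
      · rintro rfl ⟨i, hi⟩
        exact (e i).2 hi
    have hdist : ∀ i : Fin k, G.dist ((e i).1) v = 1 :=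
      fun i => SimpleGraph.dist_eq_one_iff_adj.mpr (hv _ (e i).2).symm
    refine ⟨fun i => (e i).1, fun i j h => e.injective (Subtype.ext h), ?_, ?_, ?_⟩
    · intro h
      have : v ∈ Set.range (fun i => (e i).1) := h ▸ Set.mem_univ v
      exact ((hmem v).mpr rfl) this
    · intro u1 u2 _
      exact Subtype.ext (((hmem _).mp u1.2).trans ((hmem _).mp u2.2).symm)
    · ext x
      constructor
      · rintro ⟨u, rfl⟩
        intro i
        have huv : u.1 = v := (hmem _).mp u.2
        simp only [huv, hdist i]
        exact ⟨le_refl 1, le_refl 1⟩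
      · intro hx
        refine ⟨⟨v, (hmem v).mpr rfl⟩, ?_⟩
        funext i
        show G.dist ((e i).1) v = x i
        have h1 := hx i
        have h2 := hdist i
        omega
end

section
/- Let k ≥ 2 and let H = H1∘H2 be a graph in B_k. Then for every i ∈ [k] and every x ∈ [2]^k, the distance in H between the vertex i and the vertex x equals x_(i). -/
open SimpleGraph

/-- **Lemma.** If `H = H1 ∘ H2 ∈ B_k` (`k ≥ 2`), then for every `i ∈ [k]` and `x ∈ [2]^k`,
the distance in `H` from `i` to `x` equals `x_(i)` (the `Fin 2`-value `x i` codes the entry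
`(x i : ℕ) + 1`). -/
theorem dist_comp2 (k : ℕ) (hk : 2 ≤ k) (H1 : SimpleGraph (Fin k))
    (H2 : SimpleGraph (Fin k → Fin 2)) (h : comp2 H1 H2 ∈ Bset k)
    (i : Fin k) (x : Fin k → Fin 2) :
    (comp2 H1 H2).dist (Sum.inl i) (Sum.inr x) = (x i : ℕ) + 1 := by
  obtain ⟨H1', H2', hB, hEq⟩ := h
  rw [hEq]
  clear hEq; rename' H1' => H1, H2' => H2
  have two : ∀ a : Fin 2, a = 0 ∨ a = 1 := by decide
  rcases two (x i) with hxi | hxi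
  · rw [hxi]
    exact (SimpleGraph.dist_eq_one_iff_adj).mpr hxi
  · rw [hxi]
    -- need dist = 2
    have hnadj : ¬ (comp2 H1 H2).Adj (Sum.inl i) (Sum.inr x) := by
      simp only [comp2, hxi]; decide
    -- find a middle vertex
    have hmid : ∃ z, (comp2 H1 H2).Adj (Sum.inl i) z ∧ (comp2 H1 H2).Adj z (Sum.inr x) := by
      by_cases hj : ∃ j, H1.Adj i j ∧ x j = 0
      · obtain ⟨j, hij, hxj⟩ := hj
        exact ⟨Sum.inl j, hij, hxj⟩
      · push_neg at hj
        have hall : ∀ j : Fin k, (j = i ∨ H1.Adj i j) → x j = 1 := by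
          rintro j (rfl | hij)
          · exact hxi
          · rcases two (x j) with h0 | h1
            · exact absurd h0 (hj j hij)
            · exact h1
        obtain ⟨y, hxy, hyi⟩ := hB i x hall
        have hy0 : y i = 0 := by
          rcases two (y i) with h0 | h1
          · exact h0
          · exact absurd (h1.trans hxi.symm) hyi
        exact ⟨Sum.inr y, hy0, H2.adj_symm hxy⟩
    obtain ⟨z, h1, h2⟩ := hmid
    have hle : (comp2 H1 H2).dist (Sum.inl i) (Sum.inr x) ≤ 2 := by
      have := SimpleGraph.dist_le (Walk.cons h1 (Walk.cons h2 Walk.nil))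
      simpa using this
    have hne : (comp2 H1 H2).dist (Sum.inl i) (Sum.inr x) ≠ 1 := fun hd =>
      hnadj (SimpleGraph.dist_eq_one_iff_adj.mp hd)
    have hpos : 0 < (comp2 H1 H2).dist (Sum.inl i) (Sum.inr x) := by
      apply SimpleGraph.Reachable.pos_dist_of_ne
      · exact ⟨Walk.cons h1 (Walk.cons h2 Walk.nil)⟩
      · simp
    omega
end

section
/- Let k ≥ 2 and let H be a graph in B_k. Then H is a (k,2)-completeness-resolvable graph; in fact the set [k] of vertices is a (k,2)-completeness-resolving set of H. -/
open SimpleGraph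

lemma dist_comp2_aux {k : ℕ} (H1 : SimpleGraph (Fin k)) (H2 : SimpleGraph (Fin k → Fin 2))
    (h : BCond H1 H2) (i : Fin k) (x : Fin k → Fin 2) :
    (comp2 H1 H2).dist (Sum.inl i) (Sum.inr x) = if x i = 0 then 1 else 2 := by
  split_ifs with h0
  · exact dist_eq_one_iff_adj.mpr h0
  · have hx1 : x i = 1 := by omega
    have hp : ∃ p : (comp2 H1 H2).Walk (Sum.inl i) (Sum.inr x), p.length = 2 := by
      by_cases hc : ∀ j, (j = i ∨ H1.Adj i j) → x j = 1
      · obtain ⟨y, hy, hyi⟩ := h i x hc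
        have hy0 : y i = 0 := by rw [hx1] at hyi; omega
        exact ⟨Walk.cons (show (comp2 H1 H2).Adj (Sum.inl i) (Sum.inr y) from hy0)
          (Walk.cons (show (comp2 H1 H2).Adj (Sum.inr y) (Sum.inr x) from H2.adj_symm hy)
            Walk.nil), rfl⟩
      · push_neg at hc
        obtain ⟨j, hj, hxj⟩ := hc
        have hxj0 : x j = 0 := by omega
        have hadj : H1.Adj i j := by
          rcases hj with rfl | h'
          · exact absurd hxj0 (by rw [hx1]; simp)
          · exact h'
        exact ⟨Walk.cons (show (comp2 H1 H2).Adj (Sum.inl i) (Sum.inl j) from hadj)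
          (Walk.cons (show (comp2 H1 H2).Adj (Sum.inl j) (Sum.inr x) from hxj0)
            Walk.nil), rfl⟩
    obtain ⟨p, hp2⟩ := hp
    have hle : (comp2 H1 H2).dist (Sum.inl i) (Sum.inr x) ≤ 2 := (dist_le p).trans_eq hp2
    have hr : (comp2 H1 H2).Reachable (Sum.inl i) (Sum.inr x) := ⟨p⟩
    have hpos : 0 < (comp2 H1 H2).dist (Sum.inl i) (Sum.inr x) :=
      hr.pos_dist_of_ne (by simp)
    have hne1 : (comp2 H1 H2).dist (Sum.inl i) (Sum.inr x) ≠ 1 := by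
      intro h1
      exact h0 (dist_eq_one_iff_adj.mp h1)
    omega

/-- **Lemma.** Every graph `H ∈ B_k` (`k ≥ 2`) is a `(k,2)`-CRG; in fact the set `[k]` of
vertices is a `(k,2)`-completeness-resolving set of `H`. -/
theorem mem_Bset_isCRG (k : ℕ) (hk : 2 ≤ k) (H : SimpleGraph (Fin k ⊕ (Fin k → Fin 2)))
    (h : H ∈ Bset k) :
    IsCRG H k 2 ∧ IsCRS H (fun i : Fin k => (Sum.inl i : Fin k ⊕ (Fin k → Fin 2))) 2 := by
  obtain ⟨H1, H2, hB, rfl⟩ := h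
  have hdist : ∀ (i : Fin k) (x : Fin k → Fin 2),
      (comp2 H1 H2).dist (Sum.inl i) (Sum.inr x) = if x i = 0 then 1 else 2 :=
    dist_comp2_aux H1 H2 hB
  have hinr : ∀ x : Fin k → Fin 2,
      (Sum.inr x : Fin k ⊕ (Fin k → Fin 2)) ∉
        Set.range (fun i : Fin k => (Sum.inl i : Fin k ⊕ (Fin k → Fin 2))) := by
    rintro x ⟨i, hi⟩
    simp at hi
  have hcrs : IsCRS (comp2 H1 H2)
      (fun i : Fin k => (Sum.inl i : Fin k ⊕ (Fin k → Fin 2))) 2 := by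
    refine ⟨fun a b hab => Sum.inl_injective hab, ?_, ?_, ?_⟩
    · intro hu
      exact hinr (fun _ => 0) (hu ▸ Set.mem_univ _)
    · rintro ⟨u, hu⟩ ⟨v, hv⟩ hfe
      obtain ⟨x, rfl⟩ : ∃ x, u = Sum.inr x := by
        cases u with
        | inl i => exact absurd ⟨i, rfl⟩ hu
        | inr x => exact ⟨x, rfl⟩
      obtain ⟨y, rfl⟩ : ∃ y, v = Sum.inr y := by
        cases v with
        | inl i => exact absurd ⟨i, rfl⟩ hv
        | inr y => exact ⟨y, rfl⟩
      apply Subtype.ext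
      have hxy : x = y := by
        funext i
        have h1 := congrFun hfe i
        simp only [hdist] at h1
        split_ifs at h1 with a b b <;> omega
      simp only [hxy]
    · ext f
      constructor
      · rintro ⟨⟨u, hu⟩, rfl⟩
        obtain ⟨x, rfl⟩ : ∃ x, u = Sum.inr x := by
          cases u with
          | inl i => exact absurd ⟨i, rfl⟩ hu
          | inr x => exact ⟨x, rfl⟩
        intro i
        simp only [hdist]
        split_ifs <;> omega
      · intro hf
        refine ⟨⟨Sum.inr (fun i => if f i = 1 then 0 else 1), hinr _⟩, ?_⟩
        funext i
        simp only [hdist]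
        have := hf i
        split_ifs with h1 h2 <;> omega
  exact ⟨⟨_, hcrs⟩, hcrs⟩
end

section
/- Let k ≥ 2 and let H be a graph in C_k. Then H is a (k,3)-completeness-resolvable graph; in fact the set [k] of vertices is a (k,3)-completeness-resolving set of H. -/
open SimpleGraph

section CsetProof
open SimpleGraph

variable {k : ℕ} {H2 : SimpleGraph (Fin k → Fin 3)}

lemma near3_of_adj (hC : CCond H2) {x y : Fin k → Fin 3} (h : H2.Adj x y) (t : Fin k) :
    near3 (x t) (y t) := by
  obtain ⟨i, hi | hi⟩ := hC.1 x y h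
  all_goals
    rcases eq_or_ne t i with rfl | ht
    · rcases hi.1 with ⟨h1, h2⟩ | ⟨h1, h2⟩ <;> rw [h1, h2] <;>
        exact ⟨by norm_num, by norm_num⟩
    · exact hi.2 t ht

lemma comp3_adj_inl_inr {i : Fin k} {x : Fin k → Fin 3} (h : (comp3 H2).Adj (Sum.inl i) (Sum.inr x)) :
    x i = 0 := h

lemma walk_length_lb (hC : CCond H2) (i : Fin k) (x : Fin k → Fin 3)
    (p : (comp3 H2).Walk (Sum.inl i) (Sum.inr x)) : (x i : ℕ) + 1 ≤ p.length := by
  have hxle : (x i : ℕ) ≤ 2 := by have := (x i).isLt; omega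
  cases p with
  | cons h q =>
    rename_i v
    match v, h, q with
    | Sum.inl j, h, q => exact absurd h (by exact id)
    | Sum.inr y, h, q =>
      have hy : y i = 0 := h
      cases q with
      | nil =>
        simp only [SimpleGraph.Walk.length_cons, SimpleGraph.Walk.length_nil]
        -- here y = x, so x i = 0
        have : x i = 0 := hy
        simp [this]
      | cons h' q' =>
        rename_i v'
        match v', h', q' with
        | Sum.inl j, h', q' =>
          -- q' : Walk (inl j) (inr x), nonempty
          cases q' with
          | cons h'' q'' =>
            simp only [SimpleGraph.Walk.length_cons]
            omega
        | Sum.inr z, h', q' =>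
          have hz : (z i : ℕ) ≤ 1 := by
            have hn := near3_of_adj hC (show H2.Adj y z from h') i
            have h0 : (y i : ℕ) = 0 := by rw [hy]; rfl
            have hn2 : (z i : ℕ) ≤ (y i : ℕ) + 1 := hn.2
            omega
          cases q' with
          | nil =>
            -- z = x
            simp only [SimpleGraph.Walk.length_cons, SimpleGraph.Walk.length_nil]
            omega
          | cons h'' q'' =>
            simp only [SimpleGraph.Walk.length_cons]
            omega

lemma comp3_dist (hC : CCond H2) (i : Fin k) (x : Fin k → Fin 3) :
    (comp3 H2).dist (Sum.inl i) (Sum.inr x) = (x i : ℕ) + 1 := by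
  set G := comp3 H2 with hG
  have hadj : ∀ (j : Fin k) (y : Fin k → Fin 3), y j = 0 → G.Adj (Sum.inl j) (Sum.inr y) :=
    fun j y h => h
  -- upper bound walk
  have hup : ∃ p : G.Walk (Sum.inl i) (Sum.inr x), p.length = (x i : ℕ) + 1 := by
    have h3 : (x i : ℕ) < 3 := (x i).isLt
    interval_cases h : (x i : ℕ)
    · have hx0 : x i = 0 := by ext; simpa using h
      exact ⟨SimpleGraph.Walk.cons (hadj i x hx0) SimpleGraph.Walk.nil, rfl⟩
    · have hx1 : x i = 1 := by ext; simpa using h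
      obtain ⟨y, hxy, hcy⟩ := hC.2.1 i x hx1
      have hy0 : y i = 0 := by
        rcases hcy.1 with ⟨h1, h2⟩ | ⟨h1, h2⟩
        · rw [hx1] at h1; exact absurd h1 (by decide)
        · exact h2
      exact ⟨SimpleGraph.Walk.cons (hadj i y hy0)
        (SimpleGraph.Walk.cons (show G.Adj (Sum.inr y) (Sum.inr x) from hxy.symm)
          SimpleGraph.Walk.nil), rfl⟩
    · have hx2 : x i = 2 := by ext; simpa using h
      by_cases hz : ∀ t, x t ≠ 0
      · obtain ⟨y, hxy, hdy⟩ := hC.2.2 i x hx2 hz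
        have hy1 : y i = 1 := by
          rcases hdy.1 with ⟨h1, h2⟩ | ⟨h1, h2⟩
          · rw [hx2] at h1; exact absurd h1 (by decide)
          · exact h2
        obtain ⟨w, hyw, hcw⟩ := hC.2.1 i y hy1
        have hw0 : w i = 0 := by
          rcases hcw.1 with ⟨h1, h2⟩ | ⟨h1, h2⟩
          · rw [hy1] at h1; exact absurd h1 (by decide)
          · exact h2
        exact ⟨SimpleGraph.Walk.cons (hadj i w hw0)
          (SimpleGraph.Walk.cons (show G.Adj (Sum.inr w) (Sum.inr y) from hyw.symm)
            (SimpleGraph.Walk.cons (show G.Adj (Sum.inr y) (Sum.inr x) from hxy.symm)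
              SimpleGraph.Walk.nil)), rfl⟩
      · push_neg at hz
        obtain ⟨t, ht⟩ := hz
        refine ⟨SimpleGraph.Walk.cons (hadj i (fun _ => 0) rfl)
          (SimpleGraph.Walk.cons (show G.Adj (Sum.inr (fun _ => (0 : Fin 3))) (Sum.inl t) from rfl)
            (SimpleGraph.Walk.cons (hadj t x ht) SimpleGraph.Walk.nil)), rfl⟩
  obtain ⟨p, hp⟩ := hup
  refine le_antisymm (hp ▸ SimpleGraph.dist_le p) ?_
  obtain ⟨q, hq⟩ := (SimpleGraph.Reachable.mono le_rfl ⟨p⟩).exists_walk_length_eq_dist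
  exact hq ▸ walk_length_lb hC i x q

end CsetProof

/-- **Lemma.** Every graph `H ∈ C_k` (`k ≥ 2`) is a `(k,3)`-CRG; in fact the set `[k]` of
vertices is a `(k,3)`-completeness-resolving set of `H`. -/
theorem mem_Cset_isCRG (k : ℕ) (hk : 2 ≤ k) (H : SimpleGraph (Fin k ⊕ (Fin k → Fin 3)))
    (h : H ∈ Cset k) :
    IsCRG H k 3 ∧ IsCRS H (fun i : Fin k => (Sum.inl i : Fin k ⊕ (Fin k → Fin 3))) 3 := by
  obtain ⟨H2, hC, rfl⟩ := h
  have hdist : ∀ (i : Fin k) (x : Fin k → Fin 3),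
      (comp3 H2).dist (Sum.inl i) (Sum.inr x) = (x i : ℕ) + 1 := comp3_dist hC
  have hmem : ∀ u : {u : Fin k ⊕ (Fin k → Fin 3) //
      u ∉ Set.range (fun i : Fin k => (Sum.inl i : Fin k ⊕ (Fin k → Fin 3)))},
      ∃ x : Fin k → Fin 3, u.1 = Sum.inr x := by
    rintro ⟨(j | x), hu⟩
    · exact absurd ⟨j, rfl⟩ hu
    · exact ⟨x, rfl⟩
  have hcrs : IsCRS (comp3 H2) (fun i : Fin k => (Sum.inl i : Fin k ⊕ (Fin k → Fin 3))) 3 := by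
    refine ⟨fun a b hab => Sum.inl_injective hab, ?_, ?_, ?_⟩
    · intro hr
      have : (Sum.inr (fun _ => (0 : Fin 3)) : Fin k ⊕ (Fin k → Fin 3)) ∈
          Set.range (fun i : Fin k => (Sum.inl i : Fin k ⊕ (Fin k → Fin 3))) := by
        rw [hr]; trivial
      obtain ⟨j, hj⟩ := this
      exact Sum.inl_ne_inr hj
    · intro u v huv
      obtain ⟨x, hx⟩ := hmem u
      obtain ⟨y, hy⟩ := hmem v
      have hxy : x = y := by
        funext i
        have := congrFun huv i
        simp only [hx, hy, hdist] at this
        exact Fin.val_injective (by omega)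
      exact Subtype.ext (by rw [hx, hy, hxy])
    · ext f
      constructor
      · rintro ⟨u, rfl⟩ i
        obtain ⟨x, hx⟩ := hmem u
        simp only [hx, hdist]
        have := (x i).isLt
        omega
      · intro hf
        refine ⟨⟨Sum.inr (fun i => ⟨f i - 1, by have := (hf i).2; omega⟩), ?_⟩, ?_⟩
        · rintro ⟨j, hj⟩; exact Sum.inl_ne_inr hj
        · funext i
          simp only [hdist]
          have := hf i
          show (f i - 1) + 1 = f i
          omega
  exact ⟨⟨_, hcrs⟩, hcrs⟩
end

section
/- Let k ≥ 2 and let H2 be a graph on [2]^k that is K̄_[k]-minimal, where K̄_[k] is the edgeless graph on [k]. Then 2^{k−1} ≤ |E(H2)| ≤ k·2^{k−1}; moreover |E(H2)| = 2^{k−1} if and only if H2 = R_k, and |E(H2)| = k·2^{k−1} if and only if H2 = Q_k, the hypercube graph on [2]^k. -/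
open SimpleGraph

open Finset

abbrev V2 (k : ℕ) := Fin k → Fin 2

/-- edge `e` serves demand `(z, i)`. -/
def servesE {k : ℕ} (e : Sym2 (V2 k)) (z : V2 k) (i : Fin k) : Prop :=
  z i = 1 ∧ ∃ w, s(z, w) = e ∧ w i = 0

instance {k : ℕ} (e : Sym2 (V2 k)) (z : V2 k) (i : Fin k) : Decidable (servesE e z i) := by
  unfold servesE; infer_instance

/-- demands served by `e`. -/
def SD {k : ℕ} (e : Sym2 (V2 k)) : Finset (V2 k × Fin k) :=
  Finset.univ.filter fun p => servesE e p.1 p.2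

/-- all demands. -/
def Dset (k : ℕ) : Finset (V2 k × Fin k) := Finset.univ.filter fun p => p.1 p.2 = 1

lemma servesE_pair {k : ℕ} {x y z : V2 k} {i : Fin k} :
    servesE s(x, y) z i ↔ (z = x ∧ x i = 1 ∧ y i = 0) ∨ (z = y ∧ y i = 1 ∧ x i = 0) := by
  unfold servesE
  constructor
  · rintro ⟨hz, w, hw, hw0⟩
    rcases Sym2.eq_iff.mp hw with ⟨rfl, rfl⟩ | ⟨rfl, rfl⟩
    · exact Or.inl ⟨rfl, hz, hw0⟩
    · exact Or.inr ⟨rfl, hz, hw0⟩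
  · rintro (⟨rfl, h1, h0⟩ | ⟨rfl, h1, h0⟩)
    · exact ⟨h1, y, rfl, h0⟩
    · exact ⟨h1, x, Sym2.eq_swap, h0⟩

lemma SD_card_eq {k : ℕ} {x y : V2 k} (hxy : x ≠ y) :
    (SD s(x, y)).card = (Finset.univ.filter fun i => x i ≠ y i).card := by
  have hf2 : ∀ a b : Fin 2, a ≠ b → a = 1 → b = 0 := by decide
  have hf2' : ∀ a b : Fin 2, a ≠ b → a ≠ 1 → a = 0 ∧ b = 1 := by decide
  refine Finset.card_bij' (fun p _ => p.2)
    (fun i _ => ((if x i = 1 then x else y), i)) ?_ ?_ ?_ ?_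
  · rintro ⟨z, i⟩ hp
    simp only [SD, mem_filter, mem_univ, true_and] at hp ⊢
    rcases servesE_pair.mp hp with ⟨rfl, h1, h0⟩ | ⟨rfl, h1, h0⟩ <;>
      · rw [h1, h0]; decide
  · intro i hi
    simp only [mem_filter, mem_univ, true_and] at hi
    simp only [SD, mem_filter, mem_univ, true_and]
    by_cases h1 : x i = 1
    · rw [if_pos h1]; exact servesE_pair.mpr (Or.inl ⟨rfl, h1, hf2 _ _ hi h1⟩)
    · rw [if_neg h1]
      obtain ⟨h0, h1'⟩ := hf2' _ _ hi h1
      exact servesE_pair.mpr (Or.inr ⟨rfl, h1', h0⟩)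
  · rintro ⟨z, i⟩ hp
    simp only [SD, mem_filter, mem_univ, true_and] at hp
    rcases servesE_pair.mp hp with ⟨rfl, h1, h0⟩ | ⟨rfl, h1, h0⟩
    · dsimp only; rw [if_pos h1]
    · dsimp only
      rw [if_neg (fun hx1 => by rw [hx1] at h0; exact absurd h0 (by decide))]
  · intro i _; rfl

section Aux
variable {k : ℕ}

lemma two_pow_pred {k : ℕ} (hk : 1 ≤ k) : 2 ^ k = 2 ^ (k - 1) * 2 := by
  calc 2 ^ k = 2 ^ (k - 1 + 1) := by rw [Nat.sub_add_cancel hk]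
    _ = 2 ^ (k - 1) * 2 := pow_succ 2 (k - 1)

lemma fiber_card (hk : 1 ≤ k) (i : Fin k) (a : Fin 2) :
    (Finset.univ.filter fun x : V2 k => x i = a).card = 2 ^ (k - 1) := by
  have hcardV : Fintype.card (V2 k) = 2 ^ k := by
    simp [Fintype.card_fun]
  have hflip : ∀ b : Fin 2,
      (Finset.univ.filter fun x : V2 k => x i = b).card =
      (Finset.univ.filter fun x : V2 k => x i = b + 1).card := by
    intro b
    refine Finset.card_bij' (fun x _ => Function.update x i (x i + 1))
      (fun x _ => Function.update x i (x i + 1)) ?_ ?_ ?_ ?_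
    · intro x hx
      simp only [mem_filter, mem_univ, true_and] at hx ⊢
      rw [Function.update_self, hx]
    · intro x hx
      simp only [mem_filter, mem_univ, true_and] at hx ⊢
      have hcc : ∀ c : Fin 2, c + 1 + 1 = c := by decide
      rw [Function.update_self, hx, hcc]
    · intro x _
      simp only [Function.update_self]
      rw [Function.update_idem]
      have hcc : ∀ c : Fin 2, c + 1 + 1 = c := by decide
      rw [hcc, Function.update_eq_self]
    · intro x _
      simp only [Function.update_self]
      rw [Function.update_idem]
      have hcc : ∀ c : Fin 2, c + 1 + 1 = c := by decide
      rw [hcc, Function.update_eq_self]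
  have hsplit : (Finset.univ.filter fun x : V2 k => x i = a).card +
      (Finset.univ.filter fun x : V2 k => ¬ (x i = a)).card = 2 ^ k := by
    rw [Finset.card_filter_add_card_filter_not, Finset.card_univ, hcardV]
  have hne : (Finset.univ.filter fun x : V2 k => ¬ (x i = a)).card =
      (Finset.univ.filter fun x : V2 k => x i = a + 1).card := by
    congr 1
    apply Finset.filter_congr
    intro x _
    have : ∀ b c : Fin 2, (¬ (b = c)) ↔ b = c + 1 := by decide
    simp [this]
  rw [hne, ← hflip] at hsplit
  have h2 := two_pow_pred hk
  set c := (Finset.univ.filter fun x : V2 k => x i = a).card with hc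
  clear_value c
  clear hflip hne hc
  omega

lemma Dset_card (hk : 1 ≤ k) : (Dset k).card = k * 2 ^ (k - 1) := by
  have h1 := Finset.card_eq_sum_card_fiberwise (s := Dset k) (f := Prod.snd)
    (t := (Finset.univ : Finset (Fin k))) (fun x _ => Finset.mem_univ _)
  have h2 : ∀ i : Fin k, ((Dset k).filter fun p => p.2 = i).card =
      (Finset.univ.filter fun x : V2 k => x i = 1).card := by
    intro i
    refine Finset.card_bij' (fun p _ => p.1) (fun x _ => (x, i)) ?_ ?_ ?_ ?_
    · rintro ⟨z, j⟩ hp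
      simp only [Dset, mem_filter, mem_univ, true_and] at hp ⊢
      obtain ⟨h1, rfl⟩ := hp
      exact h1
    · intro x hx
      simp only [mem_filter, mem_univ, true_and] at hx
      exact Finset.mem_filter.mpr ⟨Finset.mem_filter.mpr ⟨Finset.mem_univ _, hx⟩, rfl⟩
    · rintro ⟨z, j⟩ hp
      simp only [Dset, mem_filter, mem_univ, true_and] at hp
      obtain ⟨h1, rfl⟩ := hp
      rfl
    · intro x _; rfl
  rw [h1]
  simp only [h2, fiber_card hk]
  rw [Finset.sum_const, Finset.card_univ, Fintype.card_fin, smul_eq_mul]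

end Aux

section Graphs
variable {k : ℕ}

instance RkDec : DecidableRel (Rk k).Adj := fun x y =>
  decidable_of_iff (x ≠ y ∧ ((∀ i, x i ≠ y i) ∨ (∀ i, y i ≠ x i)))
    (by rw [Rk, SimpleGraph.fromRel_adj])

instance QkDec : DecidableRel (Qk k).Adj := fun x y =>
  decidable_of_iff (x ≠ y ∧ ((∃ i, x i ≠ y i ∧ ∀ j, j ≠ i → x j = y j) ∨
      (∃ i, y i ≠ x i ∧ ∀ j, j ≠ i → y j = x j)))
    (by rw [Qk, SimpleGraph.fromRel_adj])

lemma Rk_adj (hk : 1 ≤ k) {x y : V2 k} : (Rk k).Adj x y ↔ ∀ i, x i ≠ y i := by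
  rw [Rk, SimpleGraph.fromRel_adj]
  constructor
  · rintro ⟨hne, h | h⟩ i
    · exact h i
    · exact (h i).symm
  · intro h
    refine ⟨fun heq => h ⟨0, by omega⟩ (by rw [heq]), Or.inl h⟩

lemma Qk_adj {x y : V2 k} :
    (Qk k).Adj x y ↔ ∃ i, y = Function.update x i (x i + 1) := by
  have hf : ∀ a b : Fin 2, a ≠ b → b = a + 1 := by decide
  have hf2 : ∀ a : Fin 2, a + 1 ≠ a := by decide
  rw [Qk, SimpleGraph.fromRel_adj]
  constructor
  · rintro ⟨hne, ⟨i, hi, hj⟩ | ⟨i, hi, hj⟩⟩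
    · refine ⟨i, funext fun j => ?_⟩
      rcases eq_or_ne j i with rfl | hji
      · rw [Function.update_self]; exact hf _ _ hi
      · rw [Function.update_of_ne hji]; exact (hj j hji).symm
    · refine ⟨i, funext fun j => ?_⟩
      rcases eq_or_ne j i with rfl | hji
      · rw [Function.update_self]; exact hf _ _ (Ne.symm hi)
      · rw [Function.update_of_ne hji]; exact hj j hji
  · rintro ⟨i, rfl⟩
    refine ⟨fun heq => ?_, Or.inl ⟨i, ?_, fun j hj => ?_⟩⟩
    · have := congrFun heq i
      rw [Function.update_self] at this
      exact hf2 _ this.symm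
    · rw [Function.update_self]; exact (hf2 _).symm
    · rw [Function.update_of_ne hj]

lemma Rk_degree (hk : 1 ≤ k) (x : V2 k) : (Rk k).degree x = 1 := by
  have : (Rk k).neighborFinset x = {fun i => x i + 1} := by
    ext y
    rw [SimpleGraph.mem_neighborFinset, Rk_adj hk, Finset.mem_singleton]
    constructor
    · intro h
      funext i
      have := h i
      revert this
      generalize x i = a; generalize y i = b
      revert a b; decide
    · rintro rfl i
      show x i ≠ x i + 1
      generalize x i = a; revert a; decide
  rw [SimpleGraph.degree, this, Finset.card_singleton]

lemma Rk_card (hk : 1 ≤ k) : (Rk k).edgeFinset.card = 2 ^ (k - 1) := by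
  have h := SimpleGraph.sum_degrees_eq_twice_card_edges (Rk k)
  simp only [Rk_degree hk] at h
  rw [Finset.sum_const, Finset.card_univ, smul_eq_mul, mul_one] at h
  have hcardV : Fintype.card (V2 k) = 2 ^ k := by simp [Fintype.card_fun]
  rw [hcardV] at h
  have h2 := two_pow_pred hk
  omega

lemma Qk_degree (x : V2 k) : (Qk k).degree x = k := by
  have himg : (Qk k).neighborFinset x =
      Finset.univ.image (fun i : Fin k => Function.update x i (x i + 1)) := by
    ext y
    rw [SimpleGraph.mem_neighborFinset, Qk_adj, Finset.mem_image]
    simp [eq_comm]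
  rw [SimpleGraph.degree, himg, Finset.card_image_of_injOn, Finset.card_univ,
    Fintype.card_fin]
  intro i _ j _ hij
  by_contra hne
  have h1 : Function.update x i (x i + 1) i = Function.update x j (x j + 1) i :=
    congrFun hij i
  rw [Function.update_self, Function.update_of_ne hne] at h1
  revert h1
  generalize x i = a; revert a; decide

lemma Qk_card (hk : 1 ≤ k) : (Qk k).edgeFinset.card = k * 2 ^ (k - 1) := by
  have h := SimpleGraph.sum_degrees_eq_twice_card_edges (Qk k)
  simp only [Qk_degree] at h
  rw [Finset.sum_const, Finset.card_univ, smul_eq_mul] at h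
  have hcardV : Fintype.card (V2 k) = 2 ^ k := by simp [Fintype.card_fun]
  rw [hcardV, mul_comm] at h
  have h2 := two_pow_pred hk
  have h3 : k * 2 ^ k = (k * 2 ^ (k - 1)) * 2 := by rw [h2]; ring
  omega

lemma edgeFinset_card_congr {V : Type*} [Fintype V] (G G' : SimpleGraph V)
    [Fintype G.edgeSet] [Fintype G'.edgeSet] (h : G = G') :
    G.edgeFinset.card = G'.edgeFinset.card := by
  subst h
  congr!

end Graphs

section Bot
variable {k : ℕ}

lemma comp2_inj {A C : SimpleGraph (Fin k)} {B D : SimpleGraph (Fin k → Fin 2)}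
    (h : comp2 A B = comp2 C D) : A = C ∧ B = D := by
  constructor
  · ext i j
    exact iff_of_eq (congrFun (congrFun (congrArg SimpleGraph.Adj h) (Sum.inl i)) (Sum.inl j))
  · ext x y
    exact iff_of_eq (congrFun (congrFun (congrArg SimpleGraph.Adj h) (Sum.inr x)) (Sum.inr y))

lemma bcond_bot_iff (H2 : SimpleGraph (Fin k → Fin 2)) :
    BCond (⊥ : SimpleGraph (Fin k)) H2 ↔
      ∀ (i : Fin k) (x : V2 k), x i = 1 → ∃ y, H2.Adj x y ∧ y i = 0 := by
  have hf : ∀ a : Fin 2, a ≠ 1 ↔ a = 0 := by decide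
  unfold BCond
  constructor
  · intro h i x hx
    obtain ⟨y, hadj, hne⟩ := h i x (by
      rintro j (rfl | hj)
      · exact hx
      · exact absurd hj (by simp))
    rw [hx] at hne
    exact ⟨y, hadj, (hf _).mp hne⟩
  · intro h i x hx
    obtain ⟨y, hadj, hy0⟩ := h i x (hx i (Or.inl rfl))
    refine ⟨y, hadj, ?_⟩
    rw [hy0, hx i (Or.inl rfl)]
    decide

lemma mem_Bset_bot (H2 : SimpleGraph (Fin k → Fin 2)) :
    comp2 (⊥ : SimpleGraph (Fin k)) H2 ∈ Bset k ↔ BCond (⊥ : SimpleGraph (Fin k)) H2 := by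
  constructor
  · rintro ⟨H1', H2', hc, heq⟩
    obtain ⟨h1, h2⟩ := comp2_inj heq
    rw [← h1, ← h2] at hc
    exact hc
  · intro hc
    exact ⟨⊥, H2, hc, rfl⟩

end Bot

/-- **Corollary.** If `H2` is `K̄_[k]`-minimal (`k ≥ 2`), then
`2 ^ (k−1) ≤ |E(H2)| ≤ k · 2 ^ (k−1)`; moreover `|E(H2)| = 2 ^ (k−1)` iff `H2 = R_k`, and
`|E(H2)| = k · 2 ^ (k−1)` iff `H2 = Q_k` (the hypercube graph). -/
theorem nullMinimal_size (k : ℕ) (hk : 2 ≤ k) (H2 : SimpleGraph (Fin k → Fin 2))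
    [DecidableRel H2.Adj] (h : H1Minimal (⊥ : SimpleGraph (Fin k)) H2) :
    (2 ^ (k - 1) ≤ H2.edgeFinset.card ∧ H2.edgeFinset.card ≤ k * 2 ^ (k - 1)) ∧
    (H2.edgeFinset.card = 2 ^ (k - 1) ↔ H2 = Rk k) ∧
    (H2.edgeFinset.card = k * 2 ^ (k - 1) ↔ H2 = Qk k) := by
  classical
  have hk1 : 1 ≤ k := by omega
  have hB : ∀ (i : Fin k) (x : V2 k), x i = 1 → ∃ y, H2.Adj x y ∧ y i = 0 :=
    (bcond_bot_iff H2).mp ((mem_Bset_bot H2).mp h.1)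
  have hMin : ∀ e ∈ H2.edgeFinset, ∃ p : V2 k × Fin k, p.1 p.2 = 1 ∧
      ∀ y, H2.Adj p.1 y → y p.2 = 0 → s(p.1, y) = e := by
    intro e he
    rw [SimpleGraph.mem_edgeFinset] at he
    have hlt : H2.deleteEdges {e} < H2 := by
      refine lt_of_le_of_ne (SimpleGraph.deleteEdges_le _) ?_
      intro heq
      have h3 : e ∈ (H2.deleteEdges {e}).edgeSet := by rw [heq]; exact he
      rw [SimpleGraph.edgeSet_deleteEdges] at h3
      exact h3.2 rfl
    have hnb := h.2 _ hlt
    rw [mem_Bset_bot, bcond_bot_iff] at hnb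
    push_neg at hnb
    obtain ⟨i, x, hx1, hx2⟩ := hnb
    refine ⟨(x, i), hx1, fun y hadj hy0 => ?_⟩
    by_contra hne
    have hadj' : (H2.deleteEdges {e}).Adj x y :=
      SimpleGraph.deleteEdges_adj.mpr ⟨hadj, by simpa using hne⟩
    exact hx2 y hadj' hy0
  have hMin' : ∀ e : Sym2 (V2 k), ∃ p : V2 k × Fin k,
      e ∈ H2.edgeFinset → (p.1 p.2 = 1 ∧ ∀ y, H2.Adj p.1 y → y p.2 = 0 → s(p.1, y) = e) := by
    intro e
    by_cases he : e ∈ H2.edgeFinset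
    · obtain ⟨p, hp⟩ := hMin e he
      exact ⟨p, fun _ => hp⟩
    · exact ⟨((fun _ => 1), ⟨0, by omega⟩), fun h' => absurd h' he⟩
  choose f hf using hMin'
  have hfD : ∀ e ∈ H2.edgeFinset, f e ∈ Dset k := fun e he =>
    Finset.mem_filter.mpr ⟨Finset.mem_univ _, (hf e he).1⟩
  have hinj : Set.InjOn f ↑H2.edgeFinset := by
    intro e1 h1 e2 h2 heq
    rw [Finset.mem_coe] at h1 h2
    obtain ⟨hp1, hu1⟩ := hf e1 h1
    obtain ⟨hp2, hu2⟩ := hf e2 h2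
    obtain ⟨y, hadj, hy0⟩ := hB (f e1).2 (f e1).1 hp1
    have he1 := hu1 y hadj hy0
    rw [← heq] at hu2
    have he2 := hu2 y hadj hy0
    rw [← he1, ← he2]
  have hUB : H2.edgeFinset.card ≤ k * 2 ^ (k - 1) := by
    calc H2.edgeFinset.card ≤ (Dset k).card :=
          Finset.card_le_card_of_injOn f hfD hinj
      _ = k * 2 ^ (k - 1) := Dset_card hk1
  have hsubD : ∀ e : Sym2 (V2 k), SD e ⊆ Dset k := by
    intro e p hp
    exact Finset.mem_filter.mpr ⟨Finset.mem_univ _, (Finset.mem_filter.mp hp).2.1⟩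
  have hcover : Dset k ⊆ H2.edgeFinset.biUnion SD := by
    intro p hp
    have hp1 : p.1 p.2 = 1 := (Finset.mem_filter.mp hp).2
    obtain ⟨y, hadj, hy0⟩ := hB p.2 p.1 hp1
    refine Finset.mem_biUnion.mpr ⟨s(p.1, y), ?_, ?_⟩
    · rw [SimpleGraph.mem_edgeFinset]; exact hadj
    · exact Finset.mem_filter.mpr ⟨Finset.mem_univ _, hp1, y, rfl, hy0⟩
  have hbiUnion_eq : H2.edgeFinset.biUnion SD = Dset k :=
    subset_antisymm (Finset.biUnion_subset.mpr fun e _ => hsubD e) hcover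
  have hSDcard : ∀ e ∈ H2.edgeFinset, 1 ≤ (SD e).card ∧ (SD e).card ≤ k := by
    intro e
    induction e using Sym2.ind with
    | _ x y =>
      intro he
      have hadj : H2.Adj x y := (SimpleGraph.mem_edgeSet H2).mp
        (SimpleGraph.mem_edgeFinset.mp he)
      rw [SD_card_eq hadj.ne]
      constructor
      · rw [Nat.one_le_iff_ne_zero, Ne, Finset.card_eq_zero]
        intro hfe
        apply hadj.ne
        funext i
        by_contra hne
        have hmem : i ∈ Finset.univ.filter fun i => x i ≠ y i :=
          Finset.mem_filter.mpr ⟨Finset.mem_univ _, hne⟩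
        rw [hfe] at hmem
        exact absurd hmem (Finset.notMem_empty i)
      · calc (Finset.univ.filter fun i => x i ≠ y i).card ≤ (Finset.univ : Finset (Fin k)).card :=
            Finset.card_filter_le _ _
          _ = k := by rw [Finset.card_univ, Fintype.card_fin]
  have hsum_le : ∑ e ∈ H2.edgeFinset, (SD e).card ≤ H2.edgeFinset.card * k := by
    have := Finset.sum_le_card_nsmul H2.edgeFinset (fun e => (SD e).card) k
      (fun e he => (hSDcard e he).2)
    rwa [smul_eq_mul] at this
  have hsum_ge : k * 2 ^ (k - 1) ≤ ∑ e ∈ H2.edgeFinset, (SD e).card := by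
    calc k * 2 ^ (k - 1) = (Dset k).card := (Dset_card hk1).symm
      _ = (H2.edgeFinset.biUnion SD).card := by rw [hbiUnion_eq]
      _ ≤ ∑ e ∈ H2.edgeFinset, (SD e).card := Finset.card_biUnion_le
  have hLB : 2 ^ (k - 1) ≤ H2.edgeFinset.card := by
    have h1 : k * 2 ^ (k - 1) ≤ k * H2.edgeFinset.card :=
      calc k * 2 ^ (k - 1) ≤ ∑ e ∈ H2.edgeFinset, (SD e).card := hsum_ge
        _ ≤ H2.edgeFinset.card * k := hsum_le
        _ = k * H2.edgeFinset.card := mul_comm _ _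
    exact Nat.le_of_mul_le_mul_left h1 (by omega)
  have hgraph_eq : ∀ (G : SimpleGraph (V2 k)) (inst : Fintype G.edgeSet),
      H2.edgeFinset = G.edgeFinset → H2 = G := by
    intro G inst heq
    exact SimpleGraph.edgeFinset_inj.mp heq
  have hRk : H2.edgeFinset.card = 2 ^ (k - 1) ↔ H2 = Rk k := by
    constructor
    · intro hc
      have hall : ∀ e ∈ H2.edgeFinset, (SD e).card = k := by
        by_contra hcon
        push_neg at hcon
        obtain ⟨e0, he0, hne0⟩ := hcon
        have hlt : ∑ e ∈ H2.edgeFinset, (SD e).card <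
            ∑ _e ∈ H2.edgeFinset, k :=
          Finset.sum_lt_sum (fun e he => (hSDcard e he).2)
            ⟨e0, he0, lt_of_le_of_ne (hSDcard e0 he0).2 hne0⟩
        rw [Finset.sum_const, smul_eq_mul, hc, mul_comm] at hlt
        omega
      have hsubR : H2.edgeFinset ⊆ (Rk k).edgeFinset := by
        intro e
        induction e using Sym2.ind with
        | _ x y =>
          intro he
          have hadj : H2.Adj x y := (SimpleGraph.mem_edgeSet H2).mp
            (SimpleGraph.mem_edgeFinset.mp he)
          rw [SimpleGraph.mem_edgeFinset, SimpleGraph.mem_edgeSet, Rk_adj hk1]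
          have hk' := hall _ he
          rw [SD_card_eq hadj.ne] at hk'
          have huniv := Finset.eq_univ_of_card _ (by rw [hk', Fintype.card_fin])
          intro i
          have hmem : i ∈ Finset.univ.filter fun i => x i ≠ y i := by
            rw [huniv]; exact Finset.mem_univ i
          exact (Finset.mem_filter.mp hmem).2
      have heq := Finset.eq_of_subset_of_card_le hsubR (by rw [Rk_card hk1, hc])
      exact hgraph_eq _ _ heq
    · intro hEq
      rw [edgeFinset_card_congr _ _ hEq, Rk_card hk1]
  have hQk : H2.edgeFinset.card = k * 2 ^ (k - 1) ↔ H2 = Qk k := by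
    constructor
    · intro hc
      have himg : Finset.image f H2.edgeFinset = Dset k := by
        apply Finset.eq_of_subset_of_card_le
        · intro d hd
          obtain ⟨e, he, rfl⟩ := Finset.mem_image.mp hd
          exact hfD e he
        · rw [Finset.card_image_of_injOn hinj, hc, Dset_card hk1]
      have huniq : ∀ p ∈ Dset k, ∀ e1 ∈ H2.edgeFinset, p ∈ SD e1 →
          ∀ e2 ∈ H2.edgeFinset, p ∈ SD e2 → e1 = e2 := by
        intro p hp e1 he1 hpe1 e2 he2 hpe2
        obtain ⟨e, he, hfe⟩ := Finset.mem_image.mp (himg ▸ hp)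
        have hserve : ∀ e' ∈ H2.edgeFinset, p ∈ SD e' → e' = e := by
          intro e' he' hpe'
          obtain ⟨hp1, w, hw, hw0⟩ := (Finset.mem_filter.mp hpe').2
          have hadj : H2.Adj p.1 w := by
            rw [← SimpleGraph.mem_edgeSet, hw]
            exact SimpleGraph.mem_edgeFinset.mp he'
          have hu := (hf e he).2
          rw [hfe] at hu
          rw [← hw]
          exact hu w hadj hw0
        rw [hserve e1 he1 hpe1, hserve e2 he2 hpe2]
      have hdisj : ∀ e1 ∈ H2.edgeFinset, ∀ e2 ∈ H2.edgeFinset, e1 ≠ e2 →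
          Disjoint (SD e1) (SD e2) := by
        intro e1 h1 e2 h2 hne
        rw [Finset.disjoint_left]
        intro p hp1 hp2
        exact hne (huniq p (hsubD _ hp1) e1 h1 hp1 e2 h2 hp2)
      have hsum_eq : ∑ e ∈ H2.edgeFinset, (SD e).card = H2.edgeFinset.card := by
        rw [← Finset.card_biUnion hdisj, hbiUnion_eq, Dset_card hk1, ← hc]
      have hone : ∀ e ∈ H2.edgeFinset, (SD e).card = 1 := by
        by_contra hcon
        push_neg at hcon
        obtain ⟨e0, he0, hne0⟩ := hcon
        have hlt : ∑ _e ∈ H2.edgeFinset, 1 < ∑ e ∈ H2.edgeFinset, (SD e).card :=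
          Finset.sum_lt_sum (fun e he => (hSDcard e he).1)
            ⟨e0, he0, lt_of_le_of_ne (hSDcard e0 he0).1 (Ne.symm hne0)⟩
        rw [Finset.sum_const, smul_eq_mul, mul_one] at hlt
        omega
      have hsubQ : H2.edgeFinset ⊆ (Qk k).edgeFinset := by
        intro e
        induction e using Sym2.ind with
        | _ x y =>
          intro he
          have hadj : H2.Adj x y := (SimpleGraph.mem_edgeSet H2).mp
            (SimpleGraph.mem_edgeFinset.mp he)
          have h1 := hone _ he
          rw [SD_card_eq hadj.ne] at h1
          obtain ⟨i, hi⟩ := Finset.card_eq_one.mp h1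
          rw [SimpleGraph.mem_edgeFinset, SimpleGraph.mem_edgeSet, Qk,
            SimpleGraph.fromRel_adj]
          refine ⟨hadj.ne, Or.inl ⟨i, ?_, ?_⟩⟩
          · have hmem : i ∈ Finset.univ.filter fun i => x i ≠ y i := by
              rw [hi]; exact Finset.mem_singleton_self i
            exact (Finset.mem_filter.mp hmem).2
          · intro j hj
            by_contra hne
            have hmem : j ∈ Finset.univ.filter fun i => x i ≠ y i :=
              Finset.mem_filter.mpr ⟨Finset.mem_univ _, hne⟩
            rw [hi, Finset.mem_singleton] at hmem
            exact hj hmem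
      have heq := Finset.eq_of_subset_of_card_le hsubQ (by rw [Qk_card hk1, hc])
      exact hgraph_eq _ _ heq
    · intro hEq
      rw [edgeFinset_card_congr _ _ hEq, Qk_card hk1]
  exact ⟨⟨hLB, hUB⟩, hRk, hQk⟩
end
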